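/- There exists a sequential approval voting profile with 3 alternatives and 4 voters plus a deterministic tie-breaking order in which a Condorcet winner is not elected. Concretely: Voter 1: C≻A≻B, Voter 2: A≻C≻B, Voter 3: A≻C≻B, Voter 4: B≻A≻C; tie-break order B≻C≻A. Then A is a Condorcet winner, yet C is the SPE winner. -/

import Mathlib

open Classical

/-- `maxWrt worse s` picks the element of `s` that every other element of `s` is `worse` than. -/
noncomputable def maxWrt {O : Type} [Nonempty O] (worse : O → O → Prop) (s : Finset O) : O :=
  if h : ∃ o ∈ s, ∀ o' ∈ s, o' ≠ o → worse o' o then h.choose else Classical.arbitrary O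

/-- Backward-induction (subgame perfect) outcome of a sequential game with `n` remaining movers,
`worse k` the strict "is worse than" relation of the `k`-th mover on outcomes. -/
noncomputable def speOut {B O : Type} [Fintype B] [Nonempty O]
    (worse : ℕ → O → O → Prop) (outcome : List B → O) : ℕ → List B → O
  | 0, h => outcome h
  | n+1, h => maxWrt (worse h.length)
      (Finset.univ.image (fun b => speOut worse outcome n (h ++ [b])))

/-- number of ballots approving `x`. -/
def votes {m : ℕ} (h : List (Finset (Fin m))) (x : Fin m) : ℕ :=
  h.countP (fun b => decide (x ∈ b))

/-- set of alternatives with the maximal number of votes. -/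
def winSet {m : ℕ} (h : List (Finset (Fin m))) : Finset (Fin m) :=
  Finset.univ.filter (fun x => ∀ y, votes h y ≤ votes h x)

/-- deterministic tie-breaking: the member of the winning set with least tie-break rank. -/
noncomputable def detWinner {m : ℕ} [Nonempty (Fin m)] (tb : Fin m → ℕ)
    (h : List (Finset (Fin m))) : Fin m :=
  maxWrt (fun y x => tb x < tb y) (winSet h)

def topRank {m : ℕ} (r : Fin m → ℕ) (S : Finset (Fin m)) : WithTop ℕ := (S.image r).min

/-- remove the most preferred element. -/
def shed {m : ℕ} (r : Fin m → ℕ) (S : Finset (Fin m)) : Finset (Fin m) :=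
  S.filter (fun a => (r a : WithTop ℕ) ≠ topRank r S)

/-- the lifted strict preference on subsets: better top, or equal top and smaller,
or equal top and equal size and recursively better after removing the tops. -/
def liftBetter {m : ℕ} (r : Fin m → ℕ) : ℕ → Finset (Fin m) → Finset (Fin m) → Prop
  | 0, _, _ => False
  | fuel+1, S, S' =>
    topRank r S < topRank r S' ∨
    (topRank r S = topRank r S' ∧ S.card < S'.card) ∨
    (topRank r S = topRank r S' ∧ S.card = S'.card ∧
      liftBetter r fuel (shed r S) (shed r S'))

/-- `x` beats `y` in pairwise majority comparison. -/
def beats {n m : ℕ} (prof : Fin n → Fin m → ℕ) (x y : Fin m) : Prop :=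
  (Finset.univ.filter (fun i => prof i x < prof i y)).card >
  (Finset.univ.filter (fun i => prof i y < prof i x)).card

/-! ### Auxiliary machinery -/

lemma maxWrt_eq {O : Type} [Nonempty O] {worse : O → O → Prop} {s : Finset O} {o : O}
    (asym : ∀ a b, worse a b → worse b a → False)
    (ho : o ∈ s) (hmax : ∀ o' ∈ s, o' ≠ o → worse o' o) : maxWrt worse s = o := by
  have h : ∃ o ∈ s, ∀ o' ∈ s, o' ≠ o → worse o' o := ⟨o, ho, hmax⟩
  rw [maxWrt, dif_pos h]
  obtain ⟨hmem, hprop⟩ := h.choose_spec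
  by_contra hne
  exact asym _ _ (hmax _ hmem hne) (hprop o ho (fun e => hne e.symm))

def foldMax {O : Type} (w : O → O → Bool) (d : O) : List O → O
  | [] => d
  | x :: xs => foldMax w (if w d x then x else d) xs

lemma foldMax_spec {O : Type} (w : O → O → Bool)
    (htrans : ∀ a b c, w a b = true → w b c = true → w a c = true)
    (htotal : ∀ a b, a ≠ b → w a b = true ∨ w b a = true) :
    ∀ (l : List O) (d : O), (foldMax w d l = d ∨ foldMax w d l ∈ l) ∧
      ∀ x, (x = d ∨ x ∈ l) → x ≠ foldMax w d l → w x (foldMax w d l) = true := by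
  intro l
  induction l with
  | nil =>
    intro d
    refine ⟨Or.inl rfl, ?_⟩
    rintro x (rfl | hx) hne
    · exact absurd rfl hne
    · cases hx
  | cons a as ih =>
    intro d
    by_cases hw : w d a = true
    · have hfold : foldMax w d (a :: as) = foldMax w a as := by
        simp [foldMax, hw]
      obtain ⟨hm, hmax⟩ := ih a
      rw [hfold]
      constructor
      · rcases hm with h | h
        · exact Or.inr (by rw [h]; exact List.mem_cons_self)
        · exact Or.inr (List.mem_cons_of_mem a h)
      · rintro x (rfl | hx) hne
        · rcases eq_or_ne a (foldMax w a as) with he | he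
          · exact he ▸ hw
          · exact htrans _ _ _ hw (hmax a (Or.inl rfl) he)
        · rcases List.mem_cons.1 hx with rfl | hx
          · exact hmax x (Or.inl rfl) hne
          · exact hmax x (Or.inr hx) hne
    · have hfold : foldMax w d (a :: as) = foldMax w d as := by
        simp [foldMax, hw]
      obtain ⟨hm, hmax⟩ := ih d
      rw [hfold]
      constructor
      · rcases hm with h | h
        · exact Or.inl h
        · exact Or.inr (List.mem_cons_of_mem a h)
      · rintro x (rfl | hx) hne
        · exact hmax x (Or.inl rfl) hne
        · rcases List.mem_cons.1 hx with rfl | hx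
          · rcases eq_or_ne x d with rfl | hxd
            · exact hmax x (Or.inl rfl) hne
            · have hxd' : w x d = true := by
                rcases htotal x d hxd with h | h
                · exact h
                · exact absurd h hw
              rcases eq_or_ne d (foldMax w d as) with he | he
              · exact he ▸ hxd'
              · exact htrans _ _ _ hxd' (hmax d (Or.inl rfl) he)
          · exact hmax x (Or.inr hx) hne

lemma maxWrt_eq_foldMax {O : Type} [Nonempty O] {worse : O → O → Prop} {w : O → O → Bool}
    (hiff : ∀ a b, worse a b ↔ w a b = true)
    (htrans : ∀ a b c, w a b = true → w b c = true → w a c = true)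
    (htotal : ∀ a b, a ≠ b → w a b = true ∨ w b a = true)
    (hasym : ∀ a b, w a b = true → w b a = true → False)
    (s : Finset O) (d : O) (l : List O)
    (hcov : ∀ x, x ∈ s ↔ (x = d ∨ x ∈ l)) :
    maxWrt worse s = foldMax w d l := by
  obtain ⟨hm, hmax⟩ := foldMax_spec w htrans htotal l d
  refine maxWrt_eq (fun a b h1 h2 => hasym a b ((hiff a b).1 h1) ((hiff b a).1 h2))
    ((hcov _).2 hm) ?_
  intro o' ho' hne
  exact (hiff _ _).2 (hmax o' ((hcov o').1 ho') hne)

/-! ### Computable mirrors of `detWinner` and `speOut` -/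

lemma mem_winSet_iff (h : List (Finset (Fin 3))) (x : Fin 3) :
    x ∈ winSet h ↔ (votes h 0 ≤ votes h x ∧ votes h 1 ≤ votes h x ∧ votes h 2 ≤ votes h x) := by
  simp only [winSet, Finset.mem_filter, Finset.mem_univ, true_and]
  constructor
  · intro hx; exact ⟨hx 0, hx 1, hx 2⟩
  · rintro ⟨a, b, c⟩ y; fin_cases y <;> assumption


def detV (a b c : ℕ) : Fin 3 :=
  if a ≤ b ∧ c ≤ b then 1 else if a ≤ c then 2 else 0

lemma detWinner_eq_detV (h : List (Finset (Fin 3))) :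
    detWinner ![2,0,1] h = detV (votes h 0) (votes h 1) (votes h 2) := by
  have tri : ∀ x : Fin 3, x = 0 ∨ x = 1 ∨ x = 2 := by decide
  rw [detWinner, detV]
  split_ifs with h1 h2
  · refine maxWrt_eq (fun a b ha hb => by omega)
      ((mem_winSet_iff h 1).2 ⟨h1.1, le_refl _, h1.2⟩) ?_
    intro o' ho' hne
    rcases tri o' with rfl | rfl | rfl
    · show (![2,0,1] : Fin 3 → ℕ) 1 < ![2,0,1] 0; decide
    · exact absurd rfl hne
    · show (![2,0,1] : Fin 3 → ℕ) 1 < ![2,0,1] 2; decide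
  · push_neg at h1
    have hv2 : (2 : Fin 3) ∈ winSet h := by
      rw [mem_winSet_iff]
      refine ⟨h2, ?_, le_refl _⟩
      by_cases hc : votes h 0 ≤ votes h 1
      · have := h1 hc; omega
      · omega
    refine maxWrt_eq (fun a b ha hb => by omega) hv2 ?_
    intro o' ho' hne
    rw [mem_winSet_iff] at ho'
    rcases tri o' with rfl | rfl | rfl
    · show (![2,0,1] : Fin 3 → ℕ) 2 < ![2,0,1] 0; decide
    · exfalso; have := h1 ho'.1; have := ho'.2.2; omega
    · exact absurd rfl hne
  · push_neg at h1 h2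
    have hv0 : (0 : Fin 3) ∈ winSet h := by
      rw [mem_winSet_iff]
      refine ⟨le_refl _, ?_, by omega⟩
      by_cases hc : votes h 0 ≤ votes h 1
      · have := h1 hc; omega
      · omega
    refine maxWrt_eq (fun a b ha hb => by omega) hv0 ?_
    intro o' ho' hne
    rw [mem_winSet_iff] at ho'
    rcases tri o' with rfl | rfl | rfl
    · exact absurd rfl hne
    · exfalso; have := h1 ho'.1; have := ho'.2.2; omega
    · exfalso; have := ho'.1; omega

/-- indicator triple of a ballot: approves 0 / 1 / 2. -/
def trip (B : Finset (Fin 3)) : ℕ × ℕ × ℕ :=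
  (if (0:Fin 3) ∈ B then 1 else 0, if (1:Fin 3) ∈ B then 1 else 0, if (2:Fin 3) ∈ B then 1 else 0)

def tripList : List (ℕ × ℕ × ℕ) :=
  [(1,0,0), (0,1,0), (0,0,1), (1,1,0), (1,0,1), (0,1,1), (1,1,1)]

lemma trip_cover : ∀ B : Finset (Fin 3), trip B = (0,0,0) ∨ trip B ∈ tripList := by decide

lemma trip_exists : ∀ t ∈ tripList, ∃ B : Finset (Fin 3), trip B = t := by decide

def wB : ℕ → Fin 3 → Fin 3 → Bool := fun i x y =>
  decide ((![![1,2,0], ![0,2,1], ![0,2,1], ![1,0,2]] : Fin 4 → Fin 3 → ℕ) (Fin.ofNat 4 i) y <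
    ![![1,2,0], ![0,2,1], ![0,2,1], ![1,0,2]] (Fin.ofNat 4 i) x)

/-- arithmetic mirror of the backward induction: state is (#movers left, index, vote counts). -/
def speV : ℕ → ℕ → ℕ → ℕ → ℕ → Fin 3
  | 0, _, a, b, c => detV a b c
  | n+1, k, a, b, c =>
    foldMax (wB k) (speV n (k+1) a b c)
      [speV n (k+1) (a+1) b c, speV n (k+1) a (b+1) c, speV n (k+1) a b (c+1),
       speV n (k+1) (a+1) (b+1) c, speV n (k+1) (a+1) b (c+1), speV n (k+1) a (b+1) (c+1),
       speV n (k+1) (a+1) (b+1) (c+1)]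

lemma speV_list (n k a b c : ℕ) :
    [speV n (k+1) (a+1) b c, speV n (k+1) a (b+1) c, speV n (k+1) a b (c+1),
     speV n (k+1) (a+1) (b+1) c, speV n (k+1) (a+1) b (c+1), speV n (k+1) a (b+1) (c+1),
     speV n (k+1) (a+1) (b+1) (c+1)] =
    tripList.map (fun t => speV n (k+1) (a + t.1) (b + t.2.1) (c + t.2.2)) := by
  simp [tripList]

lemma mem_image_univ_iff {α β : Type} [Fintype α] (i : DecidableEq β) (f : α → β) (z : β) :
    z ∈ @Finset.image α β i f Finset.univ ↔ ∃ b, f b = z := by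
  have := @Finset.mem_image α β i f Finset.univ z
  simpa using this

lemma votes_app (h : List (Finset (Fin 3))) (B : Finset (Fin 3)) (x : Fin 3) :
    votes (h ++ [B]) x = votes h x + (if x ∈ B then 1 else 0) := by
  simp [votes, List.countP_append, List.countP_cons]

lemma Mrow_total : ∀ j : Fin 4, ∀ a b : Fin 3, a ≠ b →
    ((![![1,2,0], ![0,2,1], ![0,2,1], ![1,0,2]] : Fin 4 → Fin 3 → ℕ) j b <
      ![![1,2,0], ![0,2,1], ![0,2,1], ![1,0,2]] j a) ∨
    (![![1,2,0], ![0,2,1], ![0,2,1], ![1,0,2]] j a <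
      ![![1,2,0], ![0,2,1], ![0,2,1], ![1,0,2]] j b) := by decide

lemma speOut_eq_speV : ∀ n h,
    speOut (fun i (x y : Fin 3) =>
        (![![1,2,0], ![0,2,1], ![0,2,1], ![1,0,2]] : Fin 4 → Fin 3 → ℕ) (Fin.ofNat 4 i) y <
        ![![1,2,0], ![0,2,1], ![0,2,1], ![1,0,2]] (Fin.ofNat 4 i) x)
      (fun h : List (Finset (Fin 3)) => detWinner ![2,0,1] h) n h
    = speV n h.length (votes h 0) (votes h 1) (votes h 2) := by
  intro n
  induction n with
  | zero => intro h; simp only [speOut, speV]; exact detWinner_eq_detV h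
  | succ n ih =>
    intro h
    simp only [speOut, speV]
    rw [speV_list]
    refine maxWrt_eq_foldMax (w := wB h.length)
      (fun a b => decide_eq_true_iff.symm)
      (fun a b c h1 h2 => by
        simp only [wB, decide_eq_true_eq] at h1 h2 ⊢; omega)
      (fun a b hab => by
        simp only [wB, decide_eq_true_eq]
        exact Mrow_total _ a b hab)
      (fun a b h1 h2 => by
        simp only [wB, decide_eq_true_eq] at h1 h2; omega)
      _ _ _ ?_
    intro z
    rw [mem_image_univ_iff]
    have hlen : ∀ B : Finset (Fin 3), (h ++ [B]).length = h.length + 1 := by simp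
    constructor
    · rintro ⟨B, hB⟩
      rw [ih, hlen B, votes_app, votes_app, votes_app] at hB
      have hB' : speV n (h.length + 1) (votes h 0 + (trip B).1)
          (votes h 1 + (trip B).2.1) (votes h 2 + (trip B).2.2) = z := hB
      rcases trip_cover B with h0 | hmem
      · rw [h0] at hB'
        simp only [Nat.add_zero] at hB'
        exact Or.inl hB'.symm
      · exact Or.inr (List.mem_map.2 ⟨trip B, hmem, hB'⟩)
    · rintro (rfl | hz)
      · refine ⟨∅, ?_⟩
        rw [ih, hlen, votes_app, votes_app, votes_app]
        simp [show ∀ x : Fin 3, (if x ∈ (∅ : Finset (Fin 3)) then (1:ℕ) else 0) = 0 from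
          by decide]
      · obtain ⟨t, ht, hgt⟩ := List.mem_map.1 hz
        obtain ⟨B, hB⟩ := trip_exists t ht
        refine ⟨B, ?_⟩
        rw [ih, hlen, votes_app, votes_app, votes_app, ← hgt, ← hB]
        rfl

set_option maxHeartbeats 4000000
set_option maxRecDepth 1000000

/-- Condorcet winner paradox in sequential approval voting with deterministic
tie-breaking: 3 alternatives A=0, B=1, C=2, 4 voters
(C≻A≻B, A≻C≻B, A≻C≻B, B≻A≻C), tie-break order B≻C≻A.
A is a Condorcet winner but C is elected in the SPE. -/
theorem condorcet_winner_paradox_approval_deterministic :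
    let prof : Fin 4 → Fin 3 → ℕ := ![![1,2,0], ![0,2,1], ![0,2,1], ![1,0,2]]
    let tb : Fin 3 → ℕ := ![2,0,1]
    (∀ y : Fin 3, y ≠ 0 → beats prof 0 y) ∧
    speOut (fun i (x y : Fin 3) => prof (Fin.ofNat 4 i) y < prof (Fin.ofNat 4 i) x)
      (fun h : List (Finset (Fin 3)) => detWinner tb h) 4 [] = 2 := by
  show (∀ y : Fin 3, y ≠ 0 →
      beats ![![1,2,0], ![0,2,1], ![0,2,1], ![1,0,2]] 0 y) ∧
    speOut (fun i (x y : Fin 3) =>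
        (![![1,2,0], ![0,2,1], ![0,2,1], ![1,0,2]] : Fin 4 → Fin 3 → ℕ) (Fin.ofNat 4 i) y <
        ![![1,2,0], ![0,2,1], ![0,2,1], ![1,0,2]] (Fin.ofNat 4 i) x)
      (fun h : List (Finset (Fin 3)) => detWinner ![2,0,1] h) 4 [] = 2
  constructor
  · intro y hy
    fin_cases y
    · exact absurd rfl hy
    · unfold beats; decide
    · unfold beats; decide
  · rw [speOut_eq_speV]
    decide
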